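/- Let Z be a nonempty compact metric space and κ : Z × Z → ℝ a continuous function. Let (μ_n)_{n≥0} be a sequence of Borel probability measures on Z and μ a Borel probability measure on Z such that for every z ∈ Z, ∫_Z κ(z,u) μ_n(du) → ∫_Z κ(z,u) μ(du) as n → ∞. Then the convergence is uniform in z: sup_{z∈Z} | ∫_Z κ(z,u) μ_n(du) − ∫_Z κ(z,u) μ(du) | → 0 as n → ∞. -/

import Mathlib

open MeasureTheory Filter

/-- Auxiliary: uniform equicontinuity of kernel means. -/
lemma kernel_mean_uniformEquicontinuous
    {Z : Type*} [MetricSpace Z] [CompactSpace Z]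
    [MeasurableSpace Z] [BorelSpace Z]
    (κ : Z → Z → ℝ) (hκcont : Continuous fun p : Z × Z => κ p.1 p.2)
    (ν : ℕ → Measure Z) (hν : ∀ n, IsProbabilityMeasure (ν n)) :
    UniformEquicontinuous (fun n z => ∫ u, κ z u ∂(ν n)) := by
  rw [Metric.uniformEquicontinuous_iff]
  intro ε hε
  have hκu : UniformContinuous (fun p : Z × Z => κ p.1 p.2) :=
    CompactSpace.uniformContinuous_of_continuous hκcont
  rw [Metric.uniformContinuous_iff] at hκu
  obtain ⟨δ, hδ, hδ'⟩ := hκu (ε / 2) (by linarith)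
  refine ⟨δ, hδ, fun x y hxy n => ?_⟩
  have := hν n
  have hint : ∀ z : Z, Integrable (fun u => κ z u) (ν n) := by
    intro z
    have hc : Continuous (fun u => κ z u) :=
      hκcont.comp (continuous_const.prodMk continuous_id)
    exact hc.integrable_of_hasCompactSupport (isClosed_tsupport _).isCompact
  have key : ∀ u : Z, |κ x u - κ y u| ≤ ε / 2 := by
    intro u
    have hd : dist ((x, u) : Z × Z) (y, u) < δ := by
      rw [Prod.dist_eq]
      simpa using hxy
    have := hδ' hd
    rw [Real.dist_eq] at this
    linarith
  have h1 : dist (∫ u, κ x u ∂(ν n)) (∫ u, κ y u ∂(ν n)) ≤ ε / 2 := by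
    rw [Real.dist_eq, ← integral_sub (hint x) (hint y)]
    calc |∫ u, (κ x u - κ y u) ∂(ν n)| = ‖∫ u, (κ x u - κ y u) ∂(ν n)‖ := rfl
      _ ≤ ε / 2 * ((ν n) Set.univ).toReal :=
          norm_integral_le_of_norm_le_const (Filter.Eventually.of_forall fun u => by
            simpa [Real.norm_eq_abs] using key u)
      _ = ε / 2 := by simp
  linarith

/-- If `Z` is a nonempty compact metric space, `κ : Z × Z → ℝ` is
continuous, and the kernel means `∫ κ(z,·) dμ_n` converge to `∫ κ(z,·) dμ`
pointwise in `z`, then the convergence is uniform in `z`: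
`sup_{z∈Z} |∫ κ(z,u) μ_n(du) − ∫ κ(z,u) μ(du)| → 0`. -/
theorem kernel_mean_pointwise_to_uniform
    {Z : Type*} [MetricSpace Z] [CompactSpace Z] [Nonempty Z]
    [MeasurableSpace Z] [BorelSpace Z]
    (κ : Z → Z → ℝ) (hκcont : Continuous fun p : Z × Z => κ p.1 p.2)
    (μseq : ℕ → Measure Z) (hμseq : ∀ n, IsProbabilityMeasure (μseq n))
    (μ : Measure Z) [IsProbabilityMeasure μ]
    (hpt : ∀ z : Z, Tendsto (fun n => ∫ u, κ z u ∂(μseq n)) atTop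
      (nhds (∫ u, κ z u ∂μ))) :
    Tendsto (fun n => ⨆ z : Z, |(∫ u, κ z u ∂(μseq n)) - ∫ u, κ z u ∂μ|)
      atTop (nhds 0) := by
  set F : ℕ → Z → ℝ := fun n z => ∫ u, κ z u ∂(μseq n)
  set g : Z → ℝ := fun z => ∫ u, κ z u ∂μ
  -- uniform convergence
  have hequi : Equicontinuous F :=
    (kernel_mean_uniformEquicontinuous κ hκcont μseq hμseq).equicontinuous
  have hpi : Tendsto F atTop (nhds g) := by
    rw [tendsto_pi_nhds]
    exact hpt
  have huf : TendstoUniformly F g atTop :=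
    UniformFun.tendsto_iff_tendstoUniformly.mp
      ((hequi.tendsto_uniformFun_iff_pi atTop g).mpr hpi)
  rw [Metric.tendsto_atTop]
  intro ε hε
  rw [Metric.tendstoUniformly_iff] at huf
  obtain ⟨N, hN⟩ := (huf (ε / 2) (by linarith)).exists_forall_of_atTop
  refine ⟨N, fun n hn => ?_⟩
  have hbd : ∀ z : Z, |F n z - g z| ≤ ε / 2 := by
    intro z
    have := hN n hn z
    rw [Real.dist_eq, abs_sub_comm] at this
    linarith
  have hsup_le : (⨆ z : Z, |F n z - g z|) ≤ ε / 2 :=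
    Real.iSup_le hbd (by linarith)
  have hsup_nonneg : 0 ≤ ⨆ z : Z, |F n z - g z| :=
    Real.iSup_nonneg fun z => abs_nonneg _
  rw [Real.dist_eq, sub_zero, abs_of_nonneg hsup_nonneg]
  linarith
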